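/- For every fixed r > 0: A(r,x) > 0 for all x ∈ ℝ, A(r,−x) = A(r,x) for all x ∈ ℝ, and the function x ↦ A(r,x) is monotone nondecreasing on [0,∞). -/

import Mathlib

open Real

/-- The annulus function
`A(r,x) = (π²/(4r²)) ∑_{k ≠ 0} cosh(πx/(2r))² / (sinh(π²k/r)² cosh(π(x-2πk)/(2r))²)`. -/
noncomputable def Afun (r x : ℝ) : ℝ :=
  (π ^ 2 / (4 * r ^ 2)) * ∑' k : {k : ℤ // k ≠ 0},
    (Real.cosh (π * x / (2 * r))) ^ 2 /
      ((Real.sinh (π ^ 2 * ((k : ℤ) : ℝ) / r)) ^ 2 *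
        (Real.cosh (π * (x - 2 * π * ((k : ℤ) : ℝ)) / (2 * r))) ^ 2)

noncomputable def fterm (r x c : ℝ) : ℝ :=
  (Real.cosh (π * x / (2 * r))) ^ 2 /
    ((Real.sinh (π ^ 2 * c / r)) ^ 2 *
      (Real.cosh (π * (x - 2 * π * c) / (2 * r))) ^ 2)

lemma fterm_zero (r x : ℝ) : fterm r x 0 = 0 := by simp [fterm]

lemma fterm_nonneg (r x c : ℝ) : 0 ≤ fterm r x c :=
  div_nonneg (sq_nonneg _) (mul_nonneg (sq_nonneg _) (sq_nonneg _))

lemma key_id (u b : ℝ) :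
    Real.cosh u ^ 2 / Real.cosh (u - b) ^ 2 + Real.cosh u ^ 2 / Real.cosh (u + b) ^ 2 =
    2 * (Real.cosh (2*u) + 1) * (Real.cosh (2*b) * Real.cosh (2*u) + 1) /
      (Real.cosh (2*u) + Real.cosh (2*b)) ^ 2 := by
  have h1 : (0:ℝ) < Real.cosh (u - b) ^ 2 := by positivity
  have h2 : (0:ℝ) < Real.cosh (u + b) ^ 2 := by positivity
  have h3 : (0:ℝ) < (Real.cosh (2*u) + Real.cosh (2*b)) ^ 2 := by positivity
  rw [div_add_div _ _ h1.ne' h2.ne', div_eq_div_iff (by positivity) h3.ne']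
  have hX := Real.exp_pos u
  have hY := Real.exp_pos b
  simp only [Real.cosh_eq, two_mul, Real.exp_add, Real.exp_sub, Real.exp_neg, neg_sub, neg_add]
  field_simp
  ring

lemma h_mono {C t1 t2 : ℝ} (hC : 1 ≤ C) (h1 : 1 ≤ t1) (h12 : t1 ≤ t2) :
    2 * (t1 + 1) * (C * t1 + 1) / (t1 + C) ^ 2 ≤ 2 * (t2 + 1) * (C * t2 + 1) / (t2 + C) ^ 2 := by
  have ht1 : (0:ℝ) < t1 := lt_of_lt_of_le one_pos h1
  have ht2 : (0:ℝ) < t2 := lt_of_lt_of_le ht1 h12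
  have hC0 : (0:ℝ) < C := lt_of_lt_of_le one_pos hC
  have hd1 : (0:ℝ) < (t1 + C) ^ 2 := by positivity
  have hd2 : (0:ℝ) < (t2 + C) ^ 2 := by positivity
  rw [div_le_div_iff₀ hd1 hd2]
  have hQ : 0 ≤ t2 + t1 + t1*t2 + 2*C + C*t2 + C*t1 + 2*C*t1*t2 + C^2 + C^2*t2 + C^2*t1 := by
    have := mul_pos ht1 ht2
    have := mul_pos hC0 ht1
    have := mul_pos hC0 ht2
    have := mul_pos (mul_pos hC0 ht1) ht2
    have := mul_pos hC0 hC0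
    have := mul_pos (mul_pos hC0 hC0) ht1
    have := mul_pos (mul_pos hC0 hC0) ht2
    nlinarith
  have key : 2 * (t2 + 1) * (C * t2 + 1) * (t1 + C) ^ 2 -
      2 * (t1 + 1) * (C * t1 + 1) * (t2 + C) ^ 2 =
      2 * ((t2 - t1) * ((C - 1) *
        (t2 + t1 + t1*t2 + 2*C + C*t2 + C*t1 + 2*C*t1*t2 + C^2 + C^2*t2 + C^2*t1))) := by
    ring
  nlinarith [mul_nonneg (sub_nonneg.2 h12) (mul_nonneg (sub_nonneg.2 hC) hQ)]

lemma pair_mono {u v : ℝ} (b : ℝ) (hu : 0 ≤ u) (huv : u ≤ v) :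
    Real.cosh u ^ 2 / Real.cosh (u - b) ^ 2 + Real.cosh u ^ 2 / Real.cosh (u + b) ^ 2 ≤
    Real.cosh v ^ 2 / Real.cosh (v - b) ^ 2 + Real.cosh v ^ 2 / Real.cosh (v + b) ^ 2 := by
  rw [key_id, key_id]
  exact h_mono (Real.one_le_cosh _) (Real.one_le_cosh _)
    (Real.cosh_le_cosh.2 (by rw [abs_of_nonneg (by linarith), abs_of_nonneg (by linarith)]; linarith))

lemma fterm_eq (r x c : ℝ) (hr : 0 < r) :
    fterm r x c = (Real.cosh (π * x / (2 * r)) ^ 2 /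
      Real.cosh (π * x / (2 * r) - π ^ 2 * c / r) ^ 2) / Real.sinh (π ^ 2 * c / r) ^ 2 := by
  unfold fterm
  rw [show π * (x - 2 * π * c) / (2 * r) = π * x / (2 * r) - π ^ 2 * c / r by
    field_simp]
  rw [mul_comm, ← div_div, div_right_comm]

lemma fterm_neg (r x c : ℝ) : fterm r x (-c) = (Real.cosh (π * x / (2 * r)) ^ 2) /
    ((Real.sinh (π ^ 2 * c / r)) ^ 2 *
      (Real.cosh (π * (x + 2 * π * c) / (2 * r))) ^ 2) := by
  unfold fterm
  rw [show π ^ 2 * (-c) / r = -(π ^ 2 * c / r) by ring, Real.sinh_neg, neg_sq,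
    show π * (x - 2 * π * (-c)) / (2 * r) = π * (x + 2 * π * c) / (2 * r) by ring]

lemma fterm_pair_mono {r x y : ℝ} (hr : 0 < r) (c : ℝ) (hx : 0 ≤ x) (hxy : x ≤ y) :
    fterm r x c + fterm r x (-c) ≤ fterm r y c + fterm r y (-c) := by
  have hneg : ∀ z : ℝ, fterm r z (-c) = (Real.cosh (π * z / (2 * r)) ^ 2 /
      Real.cosh (π * z / (2 * r) + π ^ 2 * c / r) ^ 2) / Real.sinh (π ^ 2 * c / r) ^ 2 := by
    intro z
    rw [fterm_neg]
    rw [show π * (z + 2 * π * c) / (2 * r) = π * z / (2 * r) + π ^ 2 * c / r by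
      field_simp]
    rw [mul_comm, ← div_div, div_right_comm]
  rw [fterm_eq r x c hr, fterm_eq r y c hr, hneg, hneg, ← add_div, ← add_div]
  gcongr (?_ / _)
  · exact pair_mono _ (by positivity)
      (by have := Real.pi_pos; gcongr)

lemma sq_le_sinh_sq (y : ℝ) : y ^ 2 ≤ Real.sinh y ^ 2 := by
  have h : |y| ≤ |Real.sinh y| := by
    rw [Real.abs_sinh]
    exact Real.self_le_sinh_iff.2 (abs_nonneg y)
  calc y ^ 2 = |y| ^ 2 := (sq_abs y).symm
    _ ≤ |Real.sinh y| ^ 2 := by gcongr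
    _ = Real.sinh y ^ 2 := sq_abs _

set_option maxHeartbeats 1000000 in
lemma summable_fterm {r : ℝ} (hr : 0 < r) (x : ℝ) :
    Summable (fun k : ℤ => fterm r x (k : ℝ)) := by
  have hπ := Real.pi_pos
  apply Summable.of_nonneg_of_le (fun k => fterm_nonneg r x _)
    (f := fun k : ℤ => (Real.cosh (π * x / (2 * r)) ^ 2 * (r / π ^ 2) ^ 2) * (1 / (k:ℝ) ^ 2))
  · intro k
    rcases eq_or_ne k 0 with rfl | hk
    · simp [fterm_zero]
    · have hk2 : (0:ℝ) < (k:ℝ) ^ 2 := by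
        have : (k:ℝ) ≠ 0 := Int.cast_ne_zero.2 hk
        positivity
    -- denominator lower bound
      have hb : (0:ℝ) < (π ^ 2 * (k:ℝ) / r) ^ 2 := by
        have : (k:ℝ) ≠ 0 := Int.cast_ne_zero.2 hk
        positivity
      have hd : (π ^ 2 * (k:ℝ) / r) ^ 2 ≤
          Real.sinh (π ^ 2 * (k:ℝ) / r) ^ 2 * Real.cosh (π * (x - 2 * π * (k:ℝ)) / (2 * r)) ^ 2 := by
        have h1 := sq_le_sinh_sq (π ^ 2 * (k:ℝ) / r)
        have h2 := Real.one_le_cosh (π * (x - 2 * π * (k:ℝ)) / (2 * r))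
        have hc2 : 1 ≤ Real.cosh (π * (x - 2 * π * (k:ℝ)) / (2 * r)) ^ 2 := by nlinarith
        nlinarith [mul_le_mul_of_nonneg_left hc2 (sq_nonneg (Real.sinh (π ^ 2 * (k:ℝ) / r)))]
      calc fterm r x (k:ℝ) ≤ Real.cosh (π * x / (2 * r)) ^ 2 / (π ^ 2 * (k:ℝ) / r) ^ 2 := by
            unfold fterm
            exact div_le_div_of_nonneg_left (sq_nonneg _) hb hd
            
        _ = Real.cosh (π * x / (2 * r)) ^ 2 * (r / π ^ 2) ^ 2 * (1 / (k:ℝ) ^ 2) := by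
            field_simp
  · exact (Real.summable_one_div_int_pow.2 one_lt_two).mul_left _

lemma Afun_eq (r x : ℝ) : Afun r x = (π ^ 2 / (4 * r ^ 2)) * ∑' k : ℤ, fterm r x (k : ℝ) := by
  unfold Afun
  congr 1
  refine tsum_subtype_eq_of_support_subset (f := fun k : ℤ => fterm r x (k : ℝ)) ?_
  · intro k hk
    simp only [Function.mem_support] at hk
    intro h0
    exact hk (by rw [h0]; exact_mod_cast fterm_zero r x)

set_option maxHeartbeats 1000000 in
/-- For every `r > 0`: `A(r,·)` is positive, even, and nondecreasing in `|x|`. -/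
theorem stmt6 : ∀ r : ℝ, 0 < r →
    (∀ x : ℝ, 0 < Afun r x) ∧
    (∀ x : ℝ, Afun r (-x) = Afun r x) ∧
    MonotoneOn (Afun r) (Set.Ici (0:ℝ)) := by
  intro r hr
  have hπ := Real.pi_pos
  have hc : 0 < π ^ 2 / (4 * r ^ 2) := by positivity
  refine ⟨?_, ?_, ?_⟩
  · intro x
    unfold Afun
    apply mul_pos hc
    refine Summable.tsum_pos ((summable_fterm hr x).subtype _) (fun k => fterm_nonneg r x _)
      ⟨1, one_ne_zero⟩ ?_
    have hs : 0 < Real.sinh (π ^ 2 * (((1:ℤ) : ℤ) : ℝ) / r) := by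
      apply Real.sinh_pos_iff.2
      push_cast
      positivity
    exact div_pos (by positivity) (mul_pos (pow_pos hs 2) (by positivity))
  · intro x
    rw [Afun_eq, Afun_eq]
    congr 1
    have h : ∀ k : ℤ, fterm r (-x) (k : ℝ) = fterm r x (((-k : ℤ) : ℤ) : ℝ) := by
      intro k
      push_cast
      unfold fterm
      rw [show π * -x / (2 * r) = -(π * x / (2 * r)) by ring,
        show π ^ 2 * (k : ℝ) / r = -(π ^ 2 * (-(k:ℝ)) / r) by ring,
        show π * (-x - 2 * π * (k:ℝ)) / (2 * r) = -(π * (x - 2 * π * (-(k:ℝ))) / (2 * r)) by ring,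
        Real.cosh_neg, Real.sinh_neg, Real.cosh_neg, neg_sq]
    rw [tsum_congr h]
    exact (Equiv.neg ℤ).tsum_eq (fun k : ℤ => fterm r x (k : ℝ))
  · intro x hx y hy hxy
    rw [Afun_eq, Afun_eq]
    apply mul_le_mul_of_nonneg_left ?_ hc.le
    have hinj1 : Function.Injective (fun n : ℕ => ((n : ℤ) + 1)) := fun a b h => by
      simpa using h
    have hinj2 : Function.Injective (fun n : ℕ => (-((n : ℤ) + 1))) := fun a b h => by
      simpa using h
    have hx1 : Summable (fun n : ℕ => fterm r x ((((n:ℤ) + 1) : ℤ) : ℝ)) :=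
      (summable_fterm hr x).comp_injective hinj1
    have hx2 : Summable (fun n : ℕ => fterm r x (((-((n:ℤ) + 1)) : ℤ) : ℝ)) :=
      (summable_fterm hr x).comp_injective hinj2
    have hy1 : Summable (fun n : ℕ => fterm r y ((((n:ℤ) + 1) : ℤ) : ℝ)) :=
      (summable_fterm hr y).comp_injective hinj1
    have hy2 : Summable (fun n : ℕ => fterm r y (((-((n:ℤ) + 1)) : ℤ) : ℝ)) :=
      (summable_fterm hr y).comp_injective hinj2
    rw [tsum_of_add_one_of_neg_add_one (f := fun k : ℤ => fterm r x ((k : ℤ) : ℝ)) hx1 hx2,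
      tsum_of_add_one_of_neg_add_one (f := fun k : ℤ => fterm r y ((k : ℤ) : ℝ)) hy1 hy2]
    simp only [Int.cast_zero, fterm_zero, add_zero]
    rw [← Summable.tsum_add hx1 hx2, ← Summable.tsum_add hy1 hy2]
    refine Summable.tsum_le_tsum (fun n => ?_) (hx1.add hx2) (hy1.add hy2)
    push_cast
    exact fterm_pair_mono hr _ hx hxy
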